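/- For two agents picking items alternately (sequence 1,2,1,2,...) from a set of items, where each agent in turn picks a remaining item maximizing their own additive utility, and all utilities are positive, the resulting allocation is envy-free up to one item (EF1): for each agent i and the other agent j, there is an item o in j's bundle such that u_i(bundle of i) ≥ u_i(bundle of j minus {o}). -/

import Mathlib

open Finset

def seqValid {A O : Type*} [DecidableEq O] (u : A → O → ℝ) :
    List A → List O → Finset O → Prop
  | [], [], _ => True
  | a :: s, o :: ps, rem =>
      o ∈ rem ∧ (∀ o' ∈ rem, u a o' ≤ u a o) ∧ seqValid u s ps (rem.erase o)
  | _, _, _ => False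

def bundleOf {A O : Type*} [DecidableEq A] [DecidableEq O]
    (seq : List A) (picks : List O) (i : A) : Finset O :=
  ((seq.zip picks).filterMap (fun x => if x.1 = i then some x.2 else none)).toFinset

inductive Alt {A : Type*} : A → A → List A → Prop
  | nil {a b : A} : Alt a b []
  | cons {a b : A} {s : List A} : Alt b a s → Alt a b (a :: s)

lemma bundleOf_nil {A O : Type*} [DecidableEq A] [DecidableEq O] (ps : List O) (i : A) :
    bundleOf [] ps i = ∅ := by simp [bundleOf]

lemma bundleOf_nil' {A O : Type*} [DecidableEq A] [DecidableEq O] (s : List A) (i : A) :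
    bundleOf s ([] : List O) i = ∅ := by simp [bundleOf]

lemma bundleOf_cons_self {A O : Type*} [DecidableEq A] [DecidableEq O]
    (s : List A) (ps : List O) (i : A) (o : O) :
    bundleOf (i :: s) (o :: ps) i = insert o (bundleOf s ps i) := by
  simp [bundleOf, List.filterMap_cons]

lemma bundleOf_cons_ne {A O : Type*} [DecidableEq A] [DecidableEq O]
    {c i : A} (h : c ≠ i) (s : List A) (ps : List O) (o : O) :
    bundleOf (c :: s) (o :: ps) i = bundleOf s ps i := by
  simp [bundleOf, List.filterMap_cons, h]

lemma mem_bundleOf {A O : Type*} [DecidableEq A] [DecidableEq O]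
    {s : List A} {ps : List O} {i : A} {o : O} (h : o ∈ bundleOf s ps i) : o ∈ ps := by
  rw [bundleOf, List.mem_toFinset, List.mem_filterMap] at h
  obtain ⟨x, hx, hxo⟩ := h
  by_cases h1 : x.1 = i
  · simp [h1] at hxo; exact hxo ▸ List.of_mem_zip hx |>.2
  · simp [h1] at hxo

lemma picks_mem {A O : Type*} [DecidableEq O] (u : A → O → ℝ) :
    ∀ (s : List A) (ps : List O) (rem : Finset O), seqValid u s ps rem →
      ∀ o ∈ ps, o ∈ rem := by
  intro s
  induction s with
  | nil => intro ps rem hv o ho; cases ps with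
    | nil => simp at ho
    | cons x t => exact hv.elim
  | cons c s ih =>
    intro ps rem hv o ho
    cases ps with
    | nil => exact hv.elim
    | cons x t =>
      obtain ⟨hx, _, hv'⟩ := hv
      rcases List.mem_cons.mp ho with h | h
      · exact h ▸ hx
      · exact Finset.mem_of_mem_erase (ih t _ hv' o h)

lemma not_mem_bundle {A O : Type*} [DecidableEq A] [DecidableEq O] (u : A → O → ℝ)
    {s : List A} {ps : List O} {rem : Finset O} (hv : seqValid u s ps rem)
    {x : O} (hx : x ∉ rem) (i : A) : x ∉ bundleOf s ps i := by
  intro h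
  exact hx (picks_mem u s ps rem hv x (mem_bundleOf h))

lemma lemA {O : Type*} [DecidableEq O] (u : Fin 2 → O → ℝ) (hpos : ∀ i o, 0 < u i o) :
    ∀ (n : ℕ) (s : List (Fin 2)) (ps : List O) (rem : Finset O) (a b : Fin 2),
      s.length ≤ n → a ≠ b → Alt a b s → seqValid u s ps rem →
      ∑ o ∈ bundleOf s ps b, u a o ≤ ∑ o ∈ bundleOf s ps a, u a o := by
  intro n
  induction n with
  | zero =>
    intro s ps rem a b hlen _ _ hv
    have hs : s = [] := List.eq_nil_of_length_eq_zero (Nat.le_zero.mp hlen)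
    subst hs
    cases ps with
    | nil => simp [bundleOf_nil]
    | cons x t => exact hv.elim
  | succ n ih =>
    intro s ps rem a b hlen hab halt hv
    cases halt with
    | nil =>
      cases ps with
      | nil => simp [bundleOf_nil]
      | cons x t => exact hv.elim
    | @cons _ _ s' halt' =>
      cases ps with
      | nil => exact hv.elim
      | cons x ps' =>
        obtain ⟨hx, hmax, hv'⟩ := hv
        cases halt' with
        | nil =>
          -- s' = [], so ps' = []
          cases ps' with
          | nil =>
            rw [bundleOf_cons_self, bundleOf_cons_ne hab, bundleOf_nil', bundleOf_nil']
            simp [(hpos a x).le]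
          | cons y t => exact hv'.elim
        | @cons _ _ s'' halt'' =>
          -- s' = b :: s''
          cases ps' with
          | nil => exact hv'.elim
          | cons y ps'' =>
            obtain ⟨hy, hmaxy, hv''⟩ := hv'
            have hlen'' : s''.length ≤ n := by
              simp only [List.length_cons] at hlen; omega
            have hih := ih s'' ps'' _ a b hlen'' hab halt'' hv''
            have hxny : x ∉ bundleOf s'' ps'' a :=
              not_mem_bundle u hv'' (by simp) a
            have hyny : y ∉ bundleOf s'' ps'' b :=
              not_mem_bundle u hv'' (by simp) b
            rw [bundleOf_cons_self, bundleOf_cons_ne hab,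
              bundleOf_cons_ne (Ne.symm hab), bundleOf_cons_self,
              Finset.sum_insert hxny, Finset.sum_insert hyny]
            have hyx : u a y ≤ u a x := hmax y (Finset.mem_of_mem_erase hy)
            linarith

lemma alt_ofFn : ∀ (n k : ℕ),
    Alt (A := Fin 2) ⟨k % 2, Nat.mod_lt _ two_pos⟩ ⟨(k + 1) % 2, Nat.mod_lt _ two_pos⟩
      (List.ofFn (fun t : Fin n => ⟨(k + t.val) % 2, Nat.mod_lt _ two_pos⟩)) := by
  intro n
  induction n with
  | zero => intro k; rw [List.ofFn_zero]; exact Alt.nil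
  | succ n ih =>
    intro k
    rw [List.ofFn_succ]
    have h1 : (⟨(k + (0 : Fin (n+1)).val) % 2, Nat.mod_lt _ two_pos⟩ : Fin 2)
        = ⟨k % 2, Nat.mod_lt _ two_pos⟩ := by
      apply Fin.ext; simp
    have h2 : (fun i : Fin n => (⟨(k + (i.succ : Fin (n+1)).val) % 2, Nat.mod_lt _ two_pos⟩ : Fin 2))
        = fun i : Fin n => (⟨((k + 1) + i.val) % 2, Nat.mod_lt _ two_pos⟩ : Fin 2) := by
      funext i; apply Fin.ext; simp; omega
    rw [h1, h2]
    have h3 : (⟨k % 2, Nat.mod_lt _ two_pos⟩ : Fin 2) = ⟨(k + 1 + 1) % 2, Nat.mod_lt _ two_pos⟩ := by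
      apply Fin.ext; simp; omega
    exact Alt.cons (h3 ▸ ih (k + 1))

theorem stmt0 {O : Type*} [Fintype O] [DecidableEq O]
    (u : Fin 2 → O → ℝ) (hpos : ∀ i o, 0 < u i o)
    (seq : List (Fin 2))
    (hseq : seq = List.ofFn
      (fun t : Fin (Fintype.card O) => (⟨t.val % 2, Nat.mod_lt _ (by norm_num)⟩ : Fin 2)))
    (picks : List O) (hvalid : seqValid u seq picks Finset.univ) :
    ∀ i j : Fin 2, ∃ O' ⊆ bundleOf seq picks j, O'.card ≤ 1 ∧
      ∑ o ∈ bundleOf seq picks j \ O', u i o ≤ ∑ o ∈ bundleOf seq picks i, u i o := by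
  have halt : Alt (0 : Fin 2) 1 seq := by
    have := alt_ofFn (Fintype.card O) 0
    have heq : (List.ofFn (fun t : Fin (Fintype.card O) =>
        (⟨(0 + t.val) % 2, Nat.mod_lt _ two_pos⟩ : Fin 2)))
        = seq := by
      rw [hseq]; congr 1; funext t; apply Fin.ext; simp
    rw [heq] at this
    convert this using 2 <;> decide
  clear hseq
  have h01 : (0 : Fin 2) ≠ 1 := by decide
  have hsame : ∀ i : Fin 2, ∃ O' ⊆ bundleOf seq picks i, O'.card ≤ 1 ∧
      ∑ o ∈ bundleOf seq picks i \ O', u i o ≤ ∑ o ∈ bundleOf seq picks i, u i o :=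
    fun i => ⟨∅, Finset.empty_subset _, by simp, by simp⟩
  have hEF0 : ∃ O' ⊆ bundleOf seq picks 1, O'.card ≤ 1 ∧
      ∑ o ∈ bundleOf seq picks 1 \ O', u 0 o ≤ ∑ o ∈ bundleOf seq picks 0, u 0 o := by
    refine ⟨∅, Finset.empty_subset _, by simp, ?_⟩
    rw [Finset.sdiff_empty]
    exact lemA u hpos seq.length seq picks univ 0 1 le_rfl h01 halt hvalid
  have hEF1 : ∃ O' ⊆ bundleOf seq picks 0, O'.card ≤ 1 ∧
      ∑ o ∈ bundleOf seq picks 0 \ O', u 1 o ≤ ∑ o ∈ bundleOf seq picks 1, u 1 o := by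
    cases halt with
    | nil =>
      cases picks with
      | nil => exact ⟨∅, Finset.empty_subset _, by simp, by simp [bundleOf_nil]⟩
      | cons x t => exact hvalid.elim
    | @cons _ _ s' halt' =>
      cases picks with
      | nil => exact hvalid.elim
      | cons x ps' =>
        obtain ⟨hx, hmax, hv'⟩ := hvalid
        have key := lemA u hpos s'.length s' ps' (univ.erase x) 1 0 le_rfl
          (by decide) halt' hv'
        have hxB : x ∉ bundleOf s' ps' 0 := not_mem_bundle u hv' (by simp) 0
        refine ⟨{x}, ?_, by simp, ?_⟩
        · rw [bundleOf_cons_self]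
          simp
        · rw [bundleOf_cons_self, bundleOf_cons_ne h01,
            Finset.sdiff_singleton_eq_erase, Finset.erase_insert hxB]
          exact key
  intro i j
  fin_cases i <;> fin_cases j
  · exact hsame 0
  · exact hEF0
  · exact hEF1
  · exact hsame 1
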